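/- Let C be a compact convex set with nonempty interior in a finite-dimensional real normed vector space V, and let S ⊆ V. If every extreme point of C is illuminated by some element of S, then S illuminates C: every boundary point of C is illuminated by some element of S. -/

import Mathlib

/-- A point of a convex set with one step into the interior can make all smaller steps
into the interior. -/
lemma illum_of_single_step {V : Type*} [NormedAddCommGroup V] [NormedSpace ℝ V]
    {C : Set V} (hconv : Convex ℝ C) {z v : V} {ε : ℝ} (hz : z ∈ C) (hε : 0 < ε)
    (h : z + ε • v ∈ interior C) :
    ∀ l : ℝ, 0 < l → l < ε → z + l • v ∈ interior C := by
  intro l hl hlε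
  have ha : 0 < l / ε := div_pos hl hε
  have hb : 0 ≤ 1 - l / ε := by
    have : l / ε ≤ 1 := by
      rw [div_le_one hε]; exact hlε.le
    linarith
  have := hconv.combo_interior_self_mem_interior h hz ha hb (by ring)
  convert this using 1
  have hεne : ε ≠ 0 := hε.ne'
  rw [smul_add, smul_smul, div_mul_cancel₀ _ hεne]
  module

/-- If a set `S` illuminates every extreme point of a compact convex body
`C` in a finite-dimensional real normed space, then `S` illuminates all of `∂C`. -/
theorem stmt17 (V : Type*) [NormedAddCommGroup V] [NormedSpace ℝ V] [FiniteDimensional ℝ V]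
    (C : Set V) (hC : IsCompact C) (hconv : Convex ℝ C) (hint : (interior C).Nonempty)
    (S : Set V)
    (hS : ∀ z ∈ Set.extremePoints ℝ C, ∃ v ∈ S, ∃ ε > 0,
      ∀ l : ℝ, 0 < l → l < ε → z + l • v ∈ interior C) :
    ∀ z ∈ frontier C, ∃ v ∈ S, ∃ ε > 0,
      ∀ l : ℝ, 0 < l → l < ε → z + l • v ∈ interior C := by
  -- the set of points illuminated (weakly) by some direction of S
  set D : Set V := {x : V | ∃ v ∈ S, ∃ ε : ℝ, 0 < ε ∧ x + ε • v ∈ interior C} with hD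
  -- D is open
  have hDopen : IsOpen D := by
    rw [isOpen_iff_mem_nhds]
    rintro x ⟨v, hvS, ε, hε, hx⟩
    have hcont : Continuous fun y : V => y + ε • v := by continuity
    have : (fun y : V => y + ε • v) ⁻¹' interior C ∈ nhds x :=
      hcont.continuousAt.preimage_mem_nhds (isOpen_interior.mem_nhds hx)
    exact Filter.mem_of_superset this fun y hy => ⟨v, hvS, ε, hε, hy⟩
  -- extreme points of C are in D
  have hED : Set.extremePoints ℝ C ⊆ D := by
    intro x hx
    obtain ⟨v, hvS, ε, hε, h⟩ := hS x hx
    exact ⟨v, hvS, ε / 2, by positivity, h (ε / 2) (by positivity) (by linarith)⟩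
  -- C \ D is an extreme subset of C
  have hKext : IsExtreme ℝ C (C \ D) := by
    constructor
    · exact Set.diff_subset
    · rintro x₁ hx₁ x₂ hx₂ x ⟨hxC, hxD⟩ hseg
      rw [openSegment_eq_image₂] at hseg
      obtain ⟨⟨a, b⟩, ⟨ha, hb, hab⟩, rfl⟩ := hseg
      · refine ⟨hx₁, fun hx₁D => hxD ?_⟩
        obtain ⟨v, hvS, ε, hε, h⟩ := hx₁D
        refine ⟨v, hvS, a * ε, by positivity, ?_⟩
        have := hconv.combo_interior_self_mem_interior h hx₂ ha hb.le hab
        convert this using 1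
        module
  -- C \ D is empty
  have hKempty : C \ D = ∅ := by
    by_contra h
    obtain ⟨x, hx⟩ := Set.nonempty_iff_ne_empty.mpr h
    have hKcomp : IsCompact (C \ D) := hC.of_isClosed_subset
      (hC.isClosed.sdiff hDopen) Set.diff_subset
    obtain ⟨y, hy⟩ := hKcomp.extremePoints_nonempty ⟨x, hx⟩
    have hyC : y ∈ Set.extremePoints ℝ C :=
      hKext.extremePoints_subset_extremePoints hy
    exact hy.1.2 (hED hyC)
  -- conclude
  intro z hz
  have hzC : z ∈ C := by
    rw [← hC.isClosed.closure_eq]; exact hz.1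
  have hzD : z ∈ D := by
    by_contra h
    exact absurd (Set.mem_diff z |>.mpr ⟨hzC, h⟩) (by simp [hKempty])
  obtain ⟨v, hvS, ε, hε, h⟩ := hzD
  exact ⟨v, hvS, ε, hε, illum_of_single_step hconv hzC hε h⟩
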